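/- Let q = q' ∈ (0,1), e_1 ≤ … ≤ e_W, U ∈ (e_1,e_W), and let p̃ be a maximizer of S_q over {p : p_i ≥ 0, ∑ p_i = 1, ∑ p_i^q (e_i − U) = 0}. If p̃_i > 0 and p̃_k > 0 with i < j < k, then p̃_j > 0. -/

import Mathlib

set_option maxHeartbeats 1000000


open Finset

/-- Tsallis entropy `S_q(p) = k (∑ i, p_i^q − 1)/(1−q)` (real power). -/
noncomputable def tsallisEntropy (k q : ℝ) {ι : Type*} [Fintype ι] (p : ι → ℝ) : ℝ :=
  k * ((∑ i, p i ^ q) - 1) / (1 - q)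

theorem support_interval_escort (W : ℕ) (hW : 2 ≤ W) (k q : ℝ)
    (hk : 0 < k) (hq0 : 0 < q) (hq1 : q < 1)
    (e : Fin W → ℝ) (he : Monotone e)
    (hee : e ⟨0, by omega⟩ < e ⟨W - 1, by omega⟩)
    (U : ℝ) (hU : e ⟨0, by omega⟩ < U) (hU' : U < e ⟨W - 1, by omega⟩)
    (p : Fin W → ℝ)
    (hfeas : (∀ i, 0 ≤ p i) ∧ ∑ i, p i = 1 ∧ ∑ i, p i ^ q * (e i - U) = 0)
    (hmax : ∀ p' : Fin W → ℝ,
      ((∀ i, 0 ≤ p' i) ∧ ∑ i, p' i = 1 ∧ ∑ i, p' i ^ q * (e i - U) = 0) →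
        tsallisEntropy k q p' ≤ tsallisEntropy k q p)
    (i j l : Fin W) (hij : i < j) (hjl : j < l)
    (hpi : 0 < p i) (hpl : 0 < p l) :
    0 < p j := by
  obtain ⟨hpos, hsum, hesc⟩ := hfeas
  by_contra hpj
  have hpj0 : p j = 0 := le_antisymm (not_lt.mp hpj) (hpos j)
  have hq0' : q ≠ 0 := ne_of_gt hq0
  set r : ℝ := q⁻¹ with hrdef
  have hr1 : 1 < r := (one_lt_inv₀ hq0).mpr hq1
  -- tangent line inequality for the convex function x ↦ x ^ r
  have tangent : ∀ a s : ℝ, 0 < a → 0 ≤ s →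
      a ^ r + r * a ^ (r - 1) * s ≤ (a + s) ^ r := by
    intro a s ha hs
    have hx : a * (1 + s / a) = a + s := by field_simp
    have hb : 1 + r * (s / a) ≤ (1 + s / a) ^ r :=
      one_add_mul_self_le_rpow_one_add (le_trans (by norm_num) (div_nonneg hs ha.le)) hr1.le
    have h2 : a ^ (r - 1) = a ^ r / a := Real.rpow_sub_one ha.ne' r
    have h3 : (a + s) ^ r = a ^ r * (1 + s / a) ^ r := by
      rw [← hx, Real.mul_rpow ha.le (by positivity)]
    have h4 : a ^ r * (1 + r * (s / a)) ≤ a ^ r * (1 + s / a) ^ r :=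
      mul_le_mul_of_nonneg_left hb (Real.rpow_nonneg ha.le r)
    have h5 : a ^ r + r * a ^ (r - 1) * s = a ^ r * (1 + r * (s / a)) := by
      rw [h2]; field_simp
    rw [h5, h3]; exact h4
  -- choose the convex weight lam
  have hiej : e i ≤ e j := he hij.le
  have hjel : e j ≤ e l := he hjl.le
  obtain ⟨lam, hlam0, hlam1, hlamid⟩ :
      ∃ lam : ℝ, 0 ≤ lam ∧ lam ≤ 1 ∧
        lam * (e i - U) + (1 - lam) * (e l - U) = e j - U := by
    rcases eq_or_lt_of_le (hiej.trans hjel) with heq | hlt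
    · exact ⟨1/2, by norm_num, by norm_num, by linarith⟩
    · refine ⟨(e l - e j) / (e l - e i), div_nonneg (by linarith) (by linarith),
        (div_le_one (by linarith)).mpr (by linarith), ?_⟩
      have hne : e l - e i ≠ 0 := ne_of_gt (by linarith)
      have hcan : (e l - e j) / (e l - e i) * (e l - e i) = e l - e j :=
        div_mul_cancel₀ _ hne
      linear_combination (-1 : ℝ) * hcan
  -- positive escort weights at i and l
  set X : ℝ := p i ^ q with hXdef
  set Y : ℝ := p l ^ q with hYdef
  have hX : 0 < X := Real.rpow_pos_of_pos hpi q
  have hY : 0 < Y := Real.rpow_pos_of_pos hpl q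
  set A : ℝ := (X / 2) ^ (r - 1) with hAdef
  set B : ℝ := (Y / 2) ^ (r - 1) with hBdef
  have hA : 0 < A := Real.rpow_pos_of_pos (by positivity) _
  have hB : 0 < B := Real.rpow_pos_of_pos (by positivity) _
  set m : ℝ := min A B with hmdef
  have hm : 0 < m := lt_min hA hB
  -- choose the small parameter t
  set t : ℝ := min (min (X / 2) (Y / 2)) ((r * m / 2) ^ (r - 1)⁻¹) with htdef
  have ht : 0 < t :=
    lt_min (lt_min (by positivity) (by positivity))
      (Real.rpow_pos_of_pos (by positivity) _)
  have htX : t ≤ X / 2 := (min_le_left _ _).trans (min_le_left _ _)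
  have htY : t ≤ Y / 2 := (min_le_left _ _).trans (min_le_right _ _)
  have ht1 : lam * t ≤ X / 2 := by
    calc lam * t ≤ 1 * t := mul_le_mul_of_nonneg_right hlam1 ht.le
    _ = t := one_mul t
    _ ≤ X / 2 := htX
  have ht2 : (1 - lam) * t ≤ Y / 2 := by
    calc (1 - lam) * t ≤ 1 * t :=
        mul_le_mul_of_nonneg_right (by linarith) ht.le
    _ = t := one_mul t
    _ ≤ Y / 2 := htY
  have htr : t ^ (r - 1) ≤ r * m / 2 := by
    have h1 : t ≤ (r * m / 2) ^ (r - 1)⁻¹ := min_le_right _ _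
    have h2 : t ^ (r - 1) ≤ ((r * m / 2) ^ (r - 1)⁻¹) ^ (r - 1) :=
      Real.rpow_le_rpow ht.le h1 (by linarith)
    rwa [Real.rpow_inv_rpow (by positivity) (sub_ne_zero.mpr hr1.ne')] at h2
  -- the perturbation in escort coordinates
  set D : Fin W → ℝ := fun n =>
    (if n = i then -(lam * t) else 0) + (if n = j then t else 0) +
      (if n = l then -((1 - lam) * t) else 0) with hDdef
  set x' : Fin W → ℝ := fun n => p n ^ q + D n with hx'def
  have hij' : i ≠ j := ne_of_lt hij
  have hjl' : j ≠ l := ne_of_lt hjl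
  have hil' : i ≠ l := ne_of_lt (hij.trans hjl)
  have hx'i : x' i = X - lam * t := by
    simp [hx'def, hDdef, hij', hil', hXdef]; ring
  have hx'j : x' j = t := by
    simp [hx'def, hDdef, hij'.symm, hjl', hpj0, Real.zero_rpow hq0']
  have hx'l : x' l = Y - (1 - lam) * t := by
    simp [hx'def, hDdef, hil'.symm, hjl'.symm, hYdef]; ring
  have hx'other : ∀ n, n ≠ i → n ≠ j → n ≠ l → x' n = p n ^ q := by
    intro n h1 h2 h3; simp [hx'def, hDdef, h1, h2, h3]
  have hx'nonneg : ∀ n, 0 ≤ x' n := by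
    intro n
    by_cases h1 : n = i
    · subst h1; rw [hx'i]; linarith
    by_cases h2 : n = j
    · subst h2; rw [hx'j]; exact ht.le
    by_cases h3 : n = l
    · subst h3; rw [hx'l]; linarith
    · rw [hx'other n h1 h2 h3]; exact Real.rpow_nonneg (hpos n) q
  -- the escort energy constraint is preserved, and the escort total is preserved
  have hDesum : ∑ n, D n * (e n - U) = 0 := by
    have h1 : ∑ n, D n * (e n - U) =
        -(lam * t) * (e i - U) + t * (e j - U) + -((1 - lam) * t) * (e l - U) := by
      simp [hDdef, add_mul, Finset.sum_add_distrib, ite_mul, Finset.sum_ite_eq']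
    rw [h1]; linear_combination (-t) * hlamid
  have hx'esum : ∑ n, x' n * (e n - U) = 0 := by
    have h1 : ∑ n, x' n * (e n - U) =
        ∑ n, p n ^ q * (e n - U) + ∑ n, D n * (e n - U) := by
      rw [← Finset.sum_add_distrib]
      exact Finset.sum_congr rfl fun n _ => by simp [hx'def]; ring
    rw [h1, hesc, hDesum, add_zero]
  have hDsum : ∑ n, D n = 0 := by
    simp [hDdef, Finset.sum_add_distrib, Finset.sum_ite_eq']
    ring
  have hx'sum : ∑ n, x' n = ∑ n, p n ^ q := by
    rw [hx'def, Finset.sum_add_distrib, hDsum, add_zero]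
  -- the new (unnormalized) probabilities and their total
  set S1 : ℝ := ∑ n, x' n ^ r with hS1def
  have hS1pos : 0 < S1 :=
    Finset.sum_pos' (fun n _ => Real.rpow_nonneg (hx'nonneg n) r)
      ⟨j, Finset.mem_univ j, by rw [hx'j]; exact Real.rpow_pos_of_pos ht r⟩
  -- key analytic step : S1 < 1
  have hS1lt : S1 < 1 := by
    have hsupp : ∀ n ∈ Finset.univ, n ∉ ({i, j, l} : Finset (Fin W)) →
        x' n ^ r - p n = 0 := by
      intro n _ hn
      simp only [Finset.mem_insert, Finset.mem_singleton, not_or] at hn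
      rw [hx'other n hn.1 hn.2.1 hn.2.2, Real.rpow_rpow_inv (hpos n) hq0', sub_self]
    have hsplit : ∑ n, (x' n ^ r - p n) = ∑ n ∈ ({i, j, l} : Finset (Fin W)), (x' n ^ r - p n) :=
      (Finset.sum_subset (Finset.subset_univ _) hsupp).symm
    have hijl : ∑ n ∈ ({i, j, l} : Finset (Fin W)), (x' n ^ r - p n) =
        (x' i ^ r - p i) + (x' j ^ r - p j) + (x' l ^ r - p l) := by
      rw [Finset.sum_insert (by simp [hij', hil']),
        Finset.sum_insert (by simp [hjl']), Finset.sum_singleton]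
      ring
    have hsub : S1 - 1 = ∑ n, (x' n ^ r - p n) := by
      rw [Finset.sum_sub_distrib, hsum, hS1def]
    -- bound the three terms
    have hXr : X ^ r = p i := Real.rpow_rpow_inv (hpos i) hq0'
    have hYr : Y ^ r = p l := Real.rpow_rpow_inv (hpos l) hq0'
    have hbi : x' i ^ r - p i ≤ -(r * A * (lam * t)) := by
      have ha : 0 < X - lam * t := by linarith
      have h1 := tangent (X - lam * t) (lam * t) ha (mul_nonneg hlam0 ht.le)
      rw [sub_add_cancel] at h1
      have h2 : A ≤ (X - lam * t) ^ (r - 1) :=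
        Real.rpow_le_rpow (by positivity) (by linarith) (by linarith)
      have h3 : r * A * (lam * t) ≤ r * (X - lam * t) ^ (r - 1) * (lam * t) :=
        mul_le_mul_of_nonneg_right
          (mul_le_mul_of_nonneg_left h2 (by linarith : (0:ℝ) ≤ r))
          (mul_nonneg hlam0 ht.le)
      rw [hx'i, ← hXr]
      linarith
    have hbl : x' l ^ r - p l ≤ -(r * B * ((1 - lam) * t)) := by
      have ha : 0 < Y - (1 - lam) * t := by linarith
      have h1 := tangent (Y - (1 - lam) * t) ((1 - lam) * t) ha (mul_nonneg (by linarith) ht.le)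
      rw [sub_add_cancel] at h1
      have h2 : B ≤ (Y - (1 - lam) * t) ^ (r - 1) :=
        Real.rpow_le_rpow (by positivity) (by linarith) (by linarith)
      have h3 : r * B * ((1 - lam) * t) ≤ r * (Y - (1 - lam) * t) ^ (r - 1) * ((1 - lam) * t) :=
        mul_le_mul_of_nonneg_right
          (mul_le_mul_of_nonneg_left h2 (by linarith : (0:ℝ) ≤ r))
          (mul_nonneg (by linarith : (0:ℝ) ≤ 1 - lam) ht.le)
      rw [hx'l, ← hYr]
      linarith
    have hpow : t ^ r = t ^ (r - 1) * t := by
      nth_rewrite 1 [show r = r - 1 + 1 by ring]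
      rw [Real.rpow_add ht, Real.rpow_one]
    have hbj : x' j ^ r - p j = t ^ (r - 1) * t := by
      rw [hx'j, hpj0, sub_zero]; exact hpow
    have hmA : m ≤ A := min_le_left _ _
    have hmB : m ≤ B := min_le_right _ _
    have hfin : (x' i ^ r - p i) + (x' j ^ r - p j) + (x' l ^ r - p l) < 0 := by
      rw [hbj]
      have h1 : t ^ (r - 1) * t ≤ (r * m / 2) * t :=
        mul_le_mul_of_nonneg_right htr ht.le
      have e1 : r * m * (lam * t) ≤ r * A * (lam * t) :=
        mul_le_mul_of_nonneg_right
          (mul_le_mul_of_nonneg_left hmA (by linarith : (0:ℝ) ≤ r))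
          (mul_nonneg hlam0 ht.le)
      have e2 : r * m * ((1 - lam) * t) ≤ r * B * ((1 - lam) * t) :=
        mul_le_mul_of_nonneg_right
          (mul_le_mul_of_nonneg_left hmB (by linarith : (0:ℝ) ≤ r))
          (mul_nonneg (by linarith : (0:ℝ) ≤ 1 - lam) ht.le)
      have e3 : r * m * (lam * t) + r * m * ((1 - lam) * t) = r * m * t := by ring
      have e4 : 0 < r * m * t := mul_pos (mul_pos (by linarith) hm) ht
      linarith
    have hfin2 : S1 - 1 = (x' i ^ r - p i) + (x' j ^ r - p j) + (x' l ^ r - p l) := by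
      rw [hsub, hsplit, hijl]
    linarith
  -- construct the competitor distribution
  set p' : Fin W → ℝ := fun n => x' n ^ r / S1 with hp'def
  have hp'nonneg : ∀ n, 0 ≤ p' n := fun n =>
    div_nonneg (Real.rpow_nonneg (hx'nonneg n) r) hS1pos.le
  have hp'sum : ∑ n, p' n = 1 := by
    rw [hp'def, ← Finset.sum_div, ← hS1def, div_self hS1pos.ne']
  have hp'q : ∀ n, p' n ^ q = x' n / S1 ^ q := by
    intro n
    rw [hp'def, Real.div_rpow (Real.rpow_nonneg (hx'nonneg n) r) hS1pos.le,
      ← Real.rpow_mul (hx'nonneg n), inv_mul_cancel₀ hq0', Real.rpow_one]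
  have hp'esc : ∑ n, p' n ^ q * (e n - U) = 0 := by
    have : ∑ n, p' n ^ q * (e n - U) = (∑ n, x' n * (e n - U)) / S1 ^ q := by
      rw [Finset.sum_div]
      exact Finset.sum_congr rfl fun n _ => by rw [hp'q n]; ring
    rw [this, hx'esum, zero_div]
  -- strict entropy increase
  set T : ℝ := ∑ n, p n ^ q with hTdef
  have hT : 0 < T :=
    Finset.sum_pos' (fun n _ => Real.rpow_nonneg (hpos n) q)
      ⟨i, Finset.mem_univ i, Real.rpow_pos_of_pos hpi q⟩
  have hS1q1 : S1 ^ q < 1 := Real.rpow_lt_one hS1pos.le hS1lt hq0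
  have hS1q0 : 0 < S1 ^ q := Real.rpow_pos_of_pos hS1pos q
  have hp'T : ∑ n, p' n ^ q = T / S1 ^ q := by
    have h1 : ∑ n, p' n ^ q = ∑ n, x' n / S1 ^ q :=
      Finset.sum_congr rfl fun n _ => hp'q n
    rw [h1, ← Finset.sum_div, hx'sum]
  have hTT : T < T / S1 ^ q := by
    rw [lt_div_iff₀ hS1q0]
    exact (mul_lt_mul_of_pos_left hS1q1 hT).trans_eq (mul_one T)
  have hent : tsallisEntropy k q p < tsallisEntropy k q p' := by
    unfold tsallisEntropy
    rw [hp'T, ← hTdef]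
    exact (div_lt_div_iff_of_pos_right (by linarith)).mpr
      (mul_lt_mul_of_pos_left (by linarith) hk)
  exact absurd (hmax p' ⟨hp'nonneg, hp'sum, hp'esc⟩) (not_le.mpr hent)
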